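/- If the rank-one matrices d_1 d_1^T, ..., d_k d_k^T (with each d_i a unit vector in R^p) are linearly independent, then each d_i d_i^T is an extreme point of the convex set K = {B ∈ Span{d_1 d_1^T, ..., d_k d_k^T} : Tr(B) = 1, B ⪰ 0}. -/

import Mathlib

open Matrix

lemma key {p : ℕ} (d : Fin p → ℝ) (hd : ∑ t, d t ^ 2 = 1)
    (X Y : Matrix (Fin p) (Fin p) ℝ) (hX : X.PosSemidef) (hY : Y.PosSemidef)
    (hTr : X.trace = 1) (a b : ℝ) (ha : 0 < a) (hb : 0 < b)
    (h : a • X + b • Y = vecMulVec d d) : X = vecMulVec d d := by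
  have hdd : d ⬝ᵥ d = 1 := by
    simpa [dotProduct, sq] using hd
  have hmv : ∀ v : Fin p → ℝ, vecMulVec d d *ᵥ v = (d ⬝ᵥ v) • d := by
    intro v
    funext i
    simp only [vecMulVec_apply, mulVec, dotProduct, Pi.smul_apply, smul_eq_mul,
      Finset.sum_mul, Finset.mul_sum]
    exact Finset.sum_congr rfl fun x _ => by ring
  have hker : ∀ v : Fin p → ℝ, d ⬝ᵥ v = 0 → X *ᵥ v = 0 := by
    intro v hv
    have h1 : v ⬝ᵥ (vecMulVec d d) *ᵥ v = 0 := by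
      rw [hmv, dotProduct_smul, hv]
      simp
    have h2 : a * (v ⬝ᵥ X *ᵥ v) + b * (v ⬝ᵥ Y *ᵥ v) = 0 := by
      have := congrArg (fun M => v ⬝ᵥ M *ᵥ v) h
      simpa [add_mulVec, smul_mulVec, dotProduct_add, dotProduct_smul, h1] using this
    have hXv : 0 ≤ v ⬝ᵥ X *ᵥ v := by simpa using hX.dotProduct_mulVec_nonneg v
    have hYv : 0 ≤ v ⬝ᵥ Y *ᵥ v := by simpa using hY.dotProduct_mulVec_nonneg v
    have hz : v ⬝ᵥ X *ᵥ v = 0 := by nlinarith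
    exact (hX.dotProduct_mulVec_zero_iff v).mp (by simpa using hz)
  set c : ℝ := d ⬝ᵥ X *ᵥ d with hc
  have hsym : Xᵀ = X := hX.1
  have hXd : X *ᵥ d = c • d := by
    set w : Fin p → ℝ := X *ᵥ d - c • d with hw
    have hdw : d ⬝ᵥ w = 0 := by
      simp [hw, dotProduct_sub, dotProduct_smul, hdd, hc, dotProduct_comm]
    have hXw : X *ᵥ w = 0 := hker w hdw
    have hww : w ⬝ᵥ w = 0 := by
      have h1 : w ⬝ᵥ (X *ᵥ d) = (X *ᵥ w) ⬝ᵥ d := by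
        rw [dotProduct_mulVec, ← mulVec_transpose, hsym]
      calc w ⬝ᵥ w = w ⬝ᵥ (X *ᵥ d) - c * (w ⬝ᵥ d) := by
            simp [hw, dotProduct_sub, dotProduct_smul]
        _ = 0 := by rw [h1, hXw, dotProduct_comm w d, hdw]; simp
    have hw0 : w = 0 := dotProduct_self_eq_zero.mp hww
    have := sub_eq_zero.mp (hw ▸ hw0)
    exact this
  -- X acts like c • vecMulVec d d on every vector
  have hact : ∀ v : Fin p → ℝ, X *ᵥ v = (c * (d ⬝ᵥ v)) • d := by
    intro v
    have hdecomp : v = (d ⬝ᵥ v) • d + (v - (d ⬝ᵥ v) • d) := by ring_nf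
    have horth : d ⬝ᵥ (v - (d ⬝ᵥ v) • d) = 0 := by
      simp [dotProduct_sub, dotProduct_smul, hdd]
    calc X *ᵥ v = X *ᵥ ((d ⬝ᵥ v) • d + (v - (d ⬝ᵥ v) • d)) := by rw [← hdecomp]
      _ = (d ⬝ᵥ v) • (X *ᵥ d) + X *ᵥ (v - (d ⬝ᵥ v) • d) := by
            rw [mulVec_add, mulVec_smul]
      _ = (c * (d ⬝ᵥ v)) • d := by
            rw [hker _ horth, hXd, add_zero, smul_smul, mul_comm]
  have hXeq : X = c • vecMulVec d d := by
    funext i j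
    have := congrFun (hact (Pi.single j 1)) i
    simpa [mulVec_single, vecMulVec_apply, mul_comm, mul_assoc, mul_left_comm] using this
  have htr : (vecMulVec d d).trace = 1 := by
    simp only [trace, diag, vecMulVec_apply]
    simpa [sq] using hd
  have hc1 : c = 1 := by
    have : X.trace = c * 1 := by rw [hXeq, trace_smul, htr]; simp
    simpa [hTr] using this.symm
  rw [hXeq, hc1, one_smul]

theorem atoms_are_extreme_points {p k : ℕ} (d : Fin k → (Fin p → ℝ))
    (hunit : ∀ i, ∑ t, d i t ^ 2 = 1)
    (hli : LinearIndependent ℝ (fun i => vecMulVec (d i) (d i))) :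
    ∀ i : Fin k,
      vecMulVec (d i) (d i) ∈
        Set.extremePoints ℝ
          {B : Matrix (Fin p) (Fin p) ℝ |
            B ∈ Submodule.span ℝ (Set.range fun j => vecMulVec (d j) (d j)) ∧
            B.trace = 1 ∧ B.PosSemidef} := by
  intro i
  have hspan : vecMulVec (d i) (d i) ∈
      Submodule.span ℝ (Set.range fun j => vecMulVec (d j) (d j)) :=
    Submodule.subset_span ⟨i, rfl⟩
  have htr : (vecMulVec (d i) (d i)).trace = 1 := by
    simp only [trace, diag, vecMulVec_apply]
    simpa [sq] using hunit i
  have hpsd : (vecMulVec (d i) (d i)).PosSemidef := by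
    refine PosSemidef.of_dotProduct_mulVec_nonneg ?_ ?_
    · ext a b
      simp [conjTranspose, vecMulVec_apply, mul_comm]
    · intro v
      have hmv : vecMulVec (d i) (d i) *ᵥ v = (d i ⬝ᵥ v) • d i := by
        funext t
        simp only [vecMulVec_apply, mulVec, dotProduct, Pi.smul_apply, smul_eq_mul,
          Finset.sum_mul, Finset.mul_sum]
        exact Finset.sum_congr rfl fun x _ => by ring
      have : v ⬝ᵥ (vecMulVec (d i) (d i)) *ᵥ v = (d i ⬝ᵥ v) * (d i ⬝ᵥ v) := by
        rw [hmv, dotProduct_smul, smul_eq_mul, dotProduct_comm]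
      simpa [star, this] using mul_self_nonneg (d i ⬝ᵥ v)
  refine ⟨⟨hspan, htr, hpsd⟩, ?_⟩
  rintro X ⟨-, hXtr, hXpsd⟩ Y ⟨-, hYtr, hYpsd⟩ ⟨a, b, ha, hb, hab, heq⟩
  exact key (d i) (hunit i) X Y hXpsd hYpsd hXtr a b ha hb heq
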